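/- Let g = h ⊕ ℝe₇ be a 7-dimensional Lie algebra with codimension-one unimodular ideal h, φ = ω∧e⁷ + ρ a G2-structure with e₇ ⊥ h of norm one, and f = ad(e₇)|_h. Then φ is exact if and only if there exist ν ∈ Λ²h* and α ∈ h* with ρ = d_h ν and f.ν − d_h α = ω, where d_h is the Chevalley–Eilenberg differential of h and f.ν denotes the natural action of the endomorphism f on 2-forms. -/

import Mathlib

open Module

section Helpers3Form
set_option linter.unusedSectionVars false

section helpers
variable {V : Type*} [AddCommGroup V] [Module ℝ V]

lemma upd0 (x y z w : V) : Function.update ![x,y,z] 0 w = ![w,y,z] := by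
  funext i; fin_cases i <;> simp
lemma upd1 (x y z w : V) : Function.update ![x,y,z] 1 w = ![x,w,z] := by
  funext i; fin_cases i <;> simp [Function.update]
lemma upd2 (x y z w : V) : Function.update ![x,y,z] 2 w = ![x,y,w] := by
  funext i; fin_cases i <;> simp [Function.update]

variable (ψ : V [⋀^Fin 3]→ₗ[ℝ] ℝ)

lemma eadd0 (x x' y z : V) : ψ ![x + x', y, z] = ψ ![x,y,z] + ψ ![x',y,z] := by
  simpa [upd0] using ψ.map_update_add ![x,y,z] 0 x x'
lemma eadd1 (x y y' z : V) : ψ ![x, y + y', z] = ψ ![x,y,z] + ψ ![x,y',z] := by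
  simpa [upd1] using ψ.map_update_add ![x,y,z] 1 y y'
lemma eadd2 (x y z z' : V) : ψ ![x, y, z + z'] = ψ ![x,y,z] + ψ ![x,y,z'] := by
  simpa [upd2] using ψ.map_update_add ![x,y,z] 2 z z'
lemma esmul0 (s : ℝ) (x y z : V) : ψ ![s • x, y, z] = s * ψ ![x,y,z] := by
  simpa [upd0] using ψ.map_update_smul ![x,y,z] 0 s x
lemma esmul1 (s : ℝ) (x y z : V) : ψ ![x, s • y, z] = s * ψ ![x,y,z] := by
  simpa [upd1] using ψ.map_update_smul ![x,y,z] 1 s y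
lemma esmul2 (s : ℝ) (x y z : V) : ψ ![x, y, s • z] = s * ψ ![x,y,z] := by
  simpa [upd2] using ψ.map_update_smul ![x,y,z] 2 s z
lemma ezero01 (x z : V) : ψ ![x, x, z] = 0 :=
  ψ.map_eq_zero_of_eq _ (i := 0) (j := 1) (by simp) (by decide)
lemma ezero02 (x y : V) : ψ ![x, y, x] = 0 :=
  ψ.map_eq_zero_of_eq _ (i := 0) (j := 2) (by simp) (by decide)
lemma ezero12 (x y : V) : ψ ![x, y, y] = 0 :=
  ψ.map_eq_zero_of_eq _ (i := 1) (j := 2) (by simp) (by decide)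

lemma eswap12 (x y z : V) : ψ ![x, z, y] = -ψ ![x, y, z] := by
  have h := ezero12 ψ x (y + z)
  rw [eadd1, eadd2, eadd2, ezero12, ezero12] at h
  linarith
lemma eswap01 (x y z : V) : ψ ![y, x, z] = -ψ ![x, y, z] := by
  have h := ezero01 ψ (x + y) z
  rw [eadd0, eadd1, eadd1, ezero01, ezero01] at h
  linarith

lemma expand3 (a b c e : V) (s t u : ℝ) :
    ψ ![a + s • e, b + t • e, c + u • e]
      = ψ ![a,b,c] + u * ψ ![a,b,e] - t * ψ ![a,c,e] + s * ψ ![b,c,e] := by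
  rw [eadd0, eadd1, eadd1, eadd2, eadd2, eadd2, eadd2, esmul0, esmul0, esmul0, esmul1,
    esmul1, esmul2]
  rw [esmul1, esmul2, esmul2]
  rw [ezero12, ezero02, ezero01]
  have h1 : ψ ![a,e,c] = -ψ ![a,c,e] := eswap12 ψ a c e
  have h2 : ψ ![e,b,c] = ψ ![b,c,e] := by rw [eswap01 ψ b e c, eswap12 ψ b c e]; ring
  rw [esmul0, esmul1, esmul2, ezero01, h1, h2]; ring
end helpers
end Helpers3Form


/-- Wedge product of `k` covectors, as an alternating `k`-form (determinant convention). -/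
noncomputable def wedgeCov {V : Type*} [AddCommGroup V] [Module ℝ V] {k : ℕ}
    (f : Fin k → Module.Dual ℝ V) : V [⋀^Fin k]→ₗ[ℝ] ℝ :=
  Matrix.detRowAlternating.compLinearMap (LinearMap.pi f)

/-- Wedge product of alternating forms (shuffle convention, compatible with `wedgeCov`). -/
noncomputable def aw {V : Type*} [AddCommGroup V] [Module ℝ V] {a b : ℕ}
    (ω : V [⋀^Fin a]→ₗ[ℝ] ℝ) (σ : V [⋀^Fin b]→ₗ[ℝ] ℝ) : V [⋀^Fin (a + b)]→ₗ[ℝ] ℝ :=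
  ((TensorProduct.lid ℝ ℝ).toLinearMap.compAlternatingMap (ω.domCoprod σ)).domDomCongr
    finSumFinEquiv

/-- The `i`-th coordinate covector on `Fin n → ℝ`. -/
noncomputable def pr {n : ℕ} (i : Fin n) : Module.Dual ℝ (Fin n → ℝ) := LinearMap.proj i

/-- The model `G₂` three-form `φ₀ = ω₀ ∧ e⁷ + ρ₀ = e¹²⁷ + e³⁴⁷ + e⁵⁶⁷ + e¹³⁵ − e¹⁴⁶ − e²³⁶ − e²⁴⁵`
on `ℝ⁷` (all indices 0-based). -/
noncomputable def phi0 : (Fin 7 → ℝ) [⋀^Fin 3]→ₗ[ℝ] ℝ :=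
  wedgeCov ![pr 0, pr 1, pr 6] + wedgeCov ![pr 2, pr 3, pr 6] + wedgeCov ![pr 4, pr 5, pr 6] +
    wedgeCov ![pr 0, pr 2, pr 4] - wedgeCov ![pr 0, pr 3, pr 5] - wedgeCov ![pr 1, pr 2, pr 5] -
    wedgeCov ![pr 1, pr 3, pr 4]

/-- A three-form on a real vector space is a `G₂`-structure if it is linearly
equivalent to the model form `φ₀`. -/
def IsG2 {V : Type*} [AddCommGroup V] [Module ℝ V] (φ : V [⋀^Fin 3]→ₗ[ℝ] ℝ) : Prop :=
  ∃ u : V ≃ₗ[ℝ] (Fin 7 → ℝ), φ = phi0.compLinearMap u.toLinearMap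

/-- The restriction of `ad(X)` to an ideal `h`. -/
noncomputable def adRestrict {g : Type*} [LieRing g] [LieAlgebra ℝ g] (h : LieIdeal ℝ g)
    (X : g) : ↥h.toSubmodule →ₗ[ℝ] ↥h.toSubmodule :=
  (LieAlgebra.ad ℝ g X).restrict (p := h.toSubmodule) (q := h.toSubmodule)
    (fun _ hy => h.lie_mem hy)

/-!  STATEMENT 9.  Let `g = h ⊕ ℝe₇` be a seven-dimensional Lie algebra with
codimension-one unimodular ideal `h`, let `φ = ω ∧ e⁷ + ρ` be a `G₂`-structure on `g` with
`e₇ ⊥ h` of `g_φ`-norm one (encoded via an adapted isomorphism `u`), and let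
`f = ad(e₇)|_h`.  Then `φ` is exact (for the Chevalley–Eilenberg differential of `g`)
if and only if there exist `ν ∈ Λ²h*` and `α ∈ h*` with `ρ = d_h ν` and
`f.ν − d_h α = ω`.  Here `ρ = φ|_h`, `ω(X,Y) = φ(X,Y,e₇)`,
`(f.ν)(X,Y) = −ν(fX,Y) − ν(X,fY)`, `(d_hν)(X,Y,Z) = −ν([X,Y],Z)+ν([X,Z],Y)−ν([Y,Z],X)`
and `(d_hα)(X,Y) = −α([X,Y])`. -/
theorem exact_g2_iff_exact_rho_and_torsion_equation
    (g : Type*) [LieRing g] [LieAlgebra ℝ g]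
    (h : LieIdeal ℝ g) (e7 : g) (φ : g [⋀^Fin 3]→ₗ[ℝ] ℝ)
    (hspan : ∀ x : g, ∃ y ∈ h, ∃ t : ℝ, x = y + t • e7)
    (he7 : e7 ∉ h)
    (hunimodular : ∀ X : g, X ∈ h → LinearMap.trace ℝ ↥h.toSubmodule (adRestrict h X) = 0)
    (hadapted : ∃ u : g ≃ₗ[ℝ] (Fin 7 → ℝ),
      φ = phi0.compLinearMap u.toLinearMap ∧
      (∀ x ∈ h, dotProduct (u x) (u e7) = 0) ∧
      dotProduct (u e7) (u e7) = 1) :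
    (∃ χ : g →ₗ[ℝ] g →ₗ[ℝ] ℝ, (∀ X : g, χ X X = 0) ∧
        ∀ X Y Z : g, φ ![X, Y, Z] = -χ ⁅X, Y⁆ Z + χ ⁅X, Z⁆ Y - χ ⁅Y, Z⁆ X) ↔
      (∃ ν : ↥h →ₗ[ℝ] ↥h →ₗ[ℝ] ℝ, (∀ X : ↥h, ν X X = 0) ∧
        ∃ α : ↥h →ₗ[ℝ] ℝ,
          (∀ X Y Z : ↥h, φ ![(X : g), (Y : g), (Z : g)] =
            -ν ⟨⁅(X : g), (Y : g)⁆, h.lie_mem Y.2⟩ Z +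
              ν ⟨⁅(X : g), (Z : g)⁆, h.lie_mem Z.2⟩ Y -
              ν ⟨⁅(Y : g), (Z : g)⁆, h.lie_mem Z.2⟩ X) ∧
          (∀ X Y : ↥h,
            (-(ν ⟨⁅e7, (X : g)⁆, h.lie_mem X.2⟩ Y) - ν X ⟨⁅e7, (Y : g)⁆, h.lie_mem Y.2⟩) +
              α ⟨⁅(X : g), (Y : g)⁆, h.lie_mem Y.2⟩ =
            φ ![(X : g), (Y : g), e7])) := by
  constructor
  · rintro ⟨χ, hχ0, hχ⟩
    have hanti : ∀ x y : g, χ x y = -χ y x := by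
      intro x y
      have h1 := hχ0 (x + y)
      simp only [map_add, LinearMap.add_apply, hχ0 x, hχ0 y] at h1
      linarith
    refine ⟨(χ.comp h.toSubmodule.subtype).compl₂ h.toSubmodule.subtype,
      fun X => hχ0 X, -((χ.flip e7).comp h.toSubmodule.subtype), fun X Y Z => hχ X Y Z, ?_⟩
    intro X Z
    have h1 := hχ (X : g) (Z : g) e7
    have e1 : ⁅(X : g), e7⁆ = -⁅e7, (X : g)⁆ := (lie_skew _ _).symm
    have e2 : ⁅(Z : g), e7⁆ = -⁅e7, (Z : g)⁆ := (lie_skew _ _).symm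
    rw [e1, e2, map_neg, map_neg] at h1
    simp only [LinearMap.neg_apply] at h1
    have h3 := hanti ⁅e7, (Z : g)⁆ (X : g)
    show -χ ⁅e7, (X : g)⁆ Z - χ (X : g) ⁅e7, (Z : g)⁆ +
        (-(χ ⁅(X : g), (Z : g)⁆ e7)) = φ ![(X : g), (Z : g), e7]
    linarith
  · rintro ⟨ν, hν, α, hρ, hω⟩
    classical
    have hνanti : ∀ x y : ↥h, ν x y = -ν y x := by
      intro x y
      have h1 := hν (x + y)
      simp only [map_add, LinearMap.add_apply, hν x, hν y] at h1
      linarith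
    have he0 : e7 ≠ 0 := fun h0 => he7 (h0 ▸ h.zero_mem)
    set p : Submodule ℝ g := h.toSubmodule with hp
    set q : Submodule ℝ g := ℝ ∙ e7 with hq
    have hdis : Disjoint p q := by
      rw [hq, Submodule.disjoint_span_singleton]
      intro hmem
      exact absurd hmem he7
    have hcod : p ⊔ q = ⊤ := by
      rw [eq_top_iff]
      rintro x -
      obtain ⟨y, hy, t, rfl⟩ := hspan x
      exact Submodule.add_mem_sup hy (Submodule.smul_mem _ t (Submodule.mem_span_singleton_self e7))
    have hc : IsCompl p q := ⟨hdis, codisjoint_iff.2 hcod⟩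
    set π : g →ₗ[ℝ] ↥p := p.linearProjOfIsCompl q hc with hπ
    set πq : g →ₗ[ℝ] ↥q := q.linearProjOfIsCompl p hc.symm with hπq
    set τ : g →ₗ[ℝ] ℝ := (LinearEquiv.coord ℝ g e7 he0).toLinearMap ∘ₗ πq with hτ
    have hτ7 : τ e7 = 1 := by
      have h1 : πq e7 = ⟨e7, Submodule.mem_span_singleton_self e7⟩ :=
        Submodule.linearProjOfIsCompl_apply_left hc.symm ⟨e7, Submodule.mem_span_singleton_self e7⟩
      simp [hτ, h1, LinearEquiv.coord_self]
    have hτp : ∀ x : ↥p, τ (x : g) = 0 := by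
      intro x
      have h1 : πq (x : g) = 0 := Submodule.projectionOnto_apply_of_mem_right hc.symm x.2
      simp [hτ, h1]
    have hπ7 : π e7 = 0 :=
      Submodule.projectionOnto_apply_of_mem_right hc (Submodule.mem_span_singleton_self e7)
    have hπp : ∀ x : ↥p, π (x : g) = x := fun x => Submodule.linearProjOfIsCompl_apply_left hc x
    have hdecomp : ∀ x : g, x = ((π x : ↥p) : g) + τ x • e7 := by
      intro x
      have h1 := Submodule.projection_add_projection_eq_self hc x
      have h2 : τ x • e7 = ((πq x : ↥q) : g) := LinearEquiv.coord_apply_smul ℝ g e7 he0 (πq x)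
      rw [h2]
      exact h1.symm
    -- the candidate χ
    set A : g →ₗ[ℝ] ℝ := (α ∘ₗ π) with hA
    set χ : g →ₗ[ℝ] g →ₗ[ℝ] ℝ :=
      ((ν ∘ₗ π).compl₂ π) + LinearMap.smulRight τ A - LinearMap.smulRight A τ with hχdef
    have hχap : ∀ x y : g, χ x y = ν (π x) (π y) + τ x * α (π y) - α (π x) * τ y := by
      intro x y
      simp only [hχdef, hA, LinearMap.smulRight_apply, smul_eq_mul, LinearMap.sub_apply,
        LinearMap.add_apply, LinearMap.compl₂_apply, LinearMap.comp_apply]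
      rfl
    refine ⟨χ, ?_, ?_⟩
    · intro x
      rw [hχap]
      rw [hν]
      ring
    intro X Y Z
    -- bracket of two h-elements / e7 with an h-element, as elements of ↥h
    have hbr : ∀ x y : ↥p, ⁅(x : g), (y : g)⁆ ∈ p := fun x y => h.lie_mem y.2
    have hbe : ∀ x : ↥p, ⁅e7, (x : g)⁆ ∈ p := fun x => h.lie_mem x.2
    set br : ↥p → ↥p → ↥p := fun x y => ⟨⁅(x : g), (y : g)⁆, hbr x y⟩ with hbrdef
    set be : ↥p → ↥p := fun x => ⟨⁅e7, (x : g)⁆, hbe x⟩ with hbedef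
    -- χ on the pieces
    have hχhh : ∀ x y : ↥p, χ ((x : g)) ((y : g)) = ν x y := by
      intro x y; rw [hχap, hπp, hπp, hτp, hτp]; ring
    have hχh7 : ∀ x : ↥p, χ ((x : g)) e7 = -α x := by
      intro x; rw [hχap, hπp, hπ7, hτp, hτ7]; simp
    -- bracket expansion
    have B : ∀ (x y : ↥p) (s t : ℝ), ⁅((x : g) + s • e7), ((y : g) + t • e7)⁆
        = ((br x y : ↥p) : g) + s • ((be y : ↥p) : g) - t • ((be x : ↥p) : g) := by
      intro x y s t
      have h1 : ((br x y : ↥p) : g) = ⁅(x : g), (y : g)⁆ := rfl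
      have h2 : ((be x : ↥p) : g) = ⁅e7, (x : g)⁆ := rfl
      have h3 : ((be y : ↥p) : g) = ⁅e7, (y : g)⁆ := rfl
      have h4 : ⁅(x : g), e7⁆ = -⁅e7, (x : g)⁆ := (lie_skew _ _).symm
      rw [h1, h2, h3, lie_add, add_lie, add_lie, lie_smul, lie_smul, smul_lie, smul_lie,
        lie_self, smul_zero, smul_zero, add_zero, h4, smul_neg]
      abel
    have K1 : ∀ x y z : ↥p, χ ⁅(x : g), (y : g)⁆ ((z : g)) = ν (br x y) z :=
      fun x y z => hχhh (br x y) z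
    have K2 : ∀ x y : ↥p, χ ⁅(x : g), (y : g)⁆ e7 = -α (br x y) := fun x y => hχh7 (br x y)
    have K3 : ∀ x y : ↥p, χ ⁅e7, (x : g)⁆ ((y : g)) = ν (be x) y := fun x y => hχhh (be x) y
    have K4 : ∀ x : ↥p, χ ⁅e7, (x : g)⁆ e7 = -α (be x) := fun x => hχh7 (be x)
    -- χ of (h-element) against a decomposed vector
    have hχw : ∀ (w : ↥p) (z : ↥p) (r : ℝ), χ ((w : g)) ((z : g) + r • e7) = ν w z - r * α w := by
      intro w z r
      rw [map_add, map_smul, hχhh, hχh7, smul_eq_mul]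
      ring
    -- decompose X Y Z
    obtain ⟨a, s, hX⟩ : ∃ (a : ↥p) (s : ℝ), X = (a : g) + s • e7 := ⟨π X, τ X, hdecomp X⟩
    obtain ⟨b, t, hY⟩ : ∃ (b : ↥p) (t : ℝ), Y = (b : g) + t • e7 := ⟨π Y, τ Y, hdecomp Y⟩
    obtain ⟨c, u, hZ⟩ : ∃ (c : ↥p) (u : ℝ), Z = (c : g) + u • e7 := ⟨π Z, τ Z, hdecomp Z⟩
    rw [hX, hY, hZ, expand3 φ, B, B, B]
    -- rewrite the three χ-terms
    have T1 : χ (((br a b : ↥p) : g) + s • ((be b : ↥p) : g) - t • ((be a : ↥p) : g))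
        ((c : g) + u • e7) = ν (br a b) c - u * α (br a b) + s * (ν (be b) c - u * α (be b))
          - t * (ν (be a) c - u * α (be a)) := by
      simp only [map_add, map_sub, map_smul, LinearMap.add_apply, LinearMap.sub_apply,
        LinearMap.smul_apply, smul_eq_mul, K1, K2, K3, K4, hχhh, hχh7]
      ring
    have T2 : χ (((br a c : ↥p) : g) + s • ((be c : ↥p) : g) - u • ((be a : ↥p) : g))
        ((b : g) + t • e7) = ν (br a c) b - t * α (br a c) + s * (ν (be c) b - t * α (be c))
          - u * (ν (be a) b - t * α (be a)) := by
      simp only [map_add, map_sub, map_smul, LinearMap.add_apply, LinearMap.sub_apply,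
        LinearMap.smul_apply, smul_eq_mul, K1, K2, K3, K4, hχhh, hχh7]
      ring
    have T3 : χ (((br b c : ↥p) : g) + t • ((be c : ↥p) : g) - u • ((be b : ↥p) : g))
        ((a : g) + s • e7) = ν (br b c) a - s * α (br b c) + t * (ν (be c) a - s * α (be c))
          - u * (ν (be b) a - s * α (be b)) := by
      simp only [map_add, map_sub, map_smul, LinearMap.add_apply, LinearMap.sub_apply,
        LinearMap.smul_apply, smul_eq_mul, K1, K2, K3, K4, hχhh, hχh7]
      ring
    rw [T1, T2, T3]
    -- rewrite the four φ-values
    have R0 : φ ![(a : g), (b : g), (c : g)] = -ν (br a b) c + ν (br a c) b - ν (br b c) a :=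
      hρ a b c
    have R1 : φ ![(a : g), (b : g), e7] = -ν (be a) b - ν a (be b) + α (br a b) := (hω a b).symm
    have R2 : φ ![(a : g), (c : g), e7] = -ν (be a) c - ν a (be c) + α (br a c) := (hω a c).symm
    have R3 : φ ![(b : g), (c : g), e7] = -ν (be b) c - ν b (be c) + α (br b c) := (hω b c).symm
    rw [R0, R1, R2, R3]
    have A1 : ν a (be b) = -ν (be b) a := hνanti _ _
    have A2 : ν a (be c) = -ν (be c) a := hνanti _ _
    have A3 : ν b (be c) = -ν (be c) b := hνanti _ _
    rw [A1, A2, A3]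
    ring
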